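/- Let (R,m) be a one-dimensional Cohen–Macaulay local ring, J a regular ideal, and A ⊆ J a reduction of J (i.e., AJⁿ = Jⁿ⁺¹ for some n ≥ 0). Then A·J* is a reduction of tr(J), and there exists n such that A·tr(J)ⁿ = J·tr(J)ⁿ, where products are taken inside Q(R). -/

import Mathlib

open nonZeroDivisors IsLocalRing

variable (R : Type*) [CommRing R]

/-- The image of an ideal of `R` in the total quotient ring `Q(R)`, as an
`R`-submodule of `Q(R)`. -/
noncomputable def toQ (I : Ideal R) : Submodule R (Localization R⁰) :=
  Submodule.map (Algebra.linearMap R (Localization R⁰)) I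

/-- `J* = J⁻¹ = {x ∈ Q(R) : x·J ⊆ R}`, as an `R`-submodule of `Q(R)`. -/
noncomputable def dualQ (J : Ideal R) : Submodule R (Localization R⁰) :=
  (1 : Submodule R (Localization R⁰)) / toQ R J

/-- The trace ideal `tr(J) = J·J*`, computed inside `Q(R)`. -/
noncomputable def trQ (J : Ideal R) : Submodule R (Localization R⁰) :=
  toQ R J * dualQ R J

/-- Let `(R,m)` be a one-dimensional Cohen–Macaulay local ring, `J` a regular
ideal and `A ⊆ J` a reduction of `J` (so `A·Jⁿ = Jⁿ⁺¹` for some `n`).  Then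
`A·J*` is a reduction of `tr(J)` and there exists `n` with
`A·tr(J)ⁿ = J·tr(J)ⁿ`, all products being taken inside `Q(R)`. -/
theorem reduction_of_trace (R : Type*) [CommRing R] [IsLocalRing R] [IsNoetherianRing R]
    (hdim : ringKrullDim R = 1)
    (hCM : ∃ r ∈ maximalIdeal R, r ∈ R⁰)
    (J : Ideal R) (hreg : ∃ x ∈ J, x ∈ R⁰)
    (A : Ideal R) (hAJ : A ≤ J)
    (hred : ∃ n : ℕ, A * J ^ n = J ^ (n + 1)) :
    (∃ m : ℕ, (toQ R A * dualQ R J) * trQ R J ^ m = trQ R J ^ (m + 1)) ∧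
      ∃ n : ℕ, toQ R A * trQ R J ^ n = toQ R J * trQ R J ^ n := by
  obtain ⟨n, hn⟩ := hred
  have hmul : ∀ I K : Ideal R, toQ R (I * K) = toQ R I * toQ R K := by
    intro I K
    exact Submodule.map_mul I K (Algebra.ofId R (Localization R⁰))
  have hpow : ∀ (I : Ideal R) (k : ℕ), toQ R (I ^ k) = toQ R I ^ k := by
    intro I k
    induction k with
    | zero =>
        simp [toQ, pow_zero, Ideal.one_eq_top, Submodule.one_eq_range]
    | succ k ih => rw [pow_succ, hmul, ih, pow_succ]
  have key : toQ R A * toQ R J ^ n = toQ R J ^ (n + 1) := by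
    rw [← hpow, ← hpow, ← hmul, hn]
  constructor
  · refine ⟨n, ?_⟩
    have h1 : (toQ R A * dualQ R J) * trQ R J ^ n
        = (toQ R A * toQ R J ^ n) * dualQ R J ^ (n + 1) := by
      unfold trQ; ring
    rw [h1, key]
    unfold trQ; ring
  · refine ⟨n, ?_⟩
    have h1 : toQ R A * trQ R J ^ n
        = (toQ R A * toQ R J ^ n) * dualQ R J ^ n := by
      unfold trQ; ring
    rw [h1, key, pow_succ]
    unfold trQ; ring
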